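/- The operators $K_{n,a}^{\alpha,\beta}$ reproduce the square function: $K_{n,a}^{\alpha,\beta}(t^2; x) = x^2$ for all $a > 1$, $n \geq 1$, $0 \leq \alpha \leq \beta$, and $x \geq 0$ large enough that the expression under the square root in $r^*_{n,a}$ is nonnegative and $r^*_{n,a}(x;\alpha,\beta) \geq 0$. -/

import Mathlib

/-- Charlier polynomial `C_k^{(a)}(u) = ∑_{r=0}^k (k choose r) (-u)_r (1/a)^r`. -/
noncomputable def charlier (a u : ℝ) (k : ℕ) : ℝ :=
  ∑ r ∈ Finset.range (k + 1),
    (k.choose r : ℝ) * (ascPochhammer ℝ r).eval (-u) * (1 / a) ^ r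

/-- The radicand appearing in the definition of `rstar`. -/
noncomputable def radicand (a α β x : ℝ) (n : ℕ) : ℝ :=
  (4 + 2 * α + 1 / (a - 1)) ^ 2 + 4 * (((n : ℝ) + β) ^ 2 * x ^ 2 - 10 / 3 - 3 * α - α ^ 2)

/-- The function `r*_{n,a}(x; α, β)`. -/
noncomputable def rstar (a α β x : ℝ) (n : ℕ) : ℝ :=
  (-(4 + 2 * α + 1 / (a - 1)) + Real.sqrt (radicand a α β x n)) / (2 * n)

/-- The Kantorovich-Charlier operator `K_{n,a}^{α,β}(f; x)`. -/
noncomputable def K (a α β : ℝ) (n : ℕ) (f : ℝ → ℝ) (x : ℝ) : ℝ :=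
  ((n : ℝ) + β) * Real.exp (-1) * (1 - 1 / a) ^ ((a - 1) * n * rstar a α β x n) *
    ∑' k : ℕ, charlier a (-(a - 1) * n * rstar a α β x n) k / (Nat.factorial k : ℝ) *
      ∫ s in ((k + α) / ((n : ℝ) + β))..((k + α + 1) / ((n : ℝ) + β)), f s

namespace KSq
open Real Filter Set


lemma poch_succ_right (v : ℝ) (r : ℕ) :
    (ascPochhammer ℝ (r+1)).eval v = (ascPochhammer ℝ r).eval v * (v + r) := by
  rw [ascPochhammer_succ_right]
  simp

lemma poch_succ_left (v : ℝ) (r : ℕ) :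
    (ascPochhammer ℝ (r+1)).eval v = v * (ascPochhammer ℝ r).eval (v+1) := by
  rw [ascPochhammer_succ_left]
  simp [Polynomial.eval_comp]

lemma poch_nonneg {v : ℝ} (hv : 0 ≤ v) (r : ℕ) : 0 ≤ (ascPochhammer ℝ r).eval v := by
  induction r with
  | zero => simp
  | succ r ih => rw [poch_succ_right]; positivity

/-- terms of the binomial series -/
noncomputable def term (v y : ℝ) (r : ℕ) : ℝ :=
  (ascPochhammer ℝ r).eval v * y ^ r / (Nat.factorial r : ℝ)

lemma term_succ (v y : ℝ) (r : ℕ) :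
    term v y (r+1) = term v y r * ((v + r) * y / (r+1)) := by
  unfold term
  rw [poch_succ_right, Nat.factorial_succ]
  push_cast
  field_simp
  ring

lemma summable_term (v : ℝ) {y : ℝ} (hy : |y| < 1) : Summable (term v y) := by
  have h1 : (1 + |y|)/2 < 1 := by linarith
  refine summable_of_ratio_norm_eventually_le h1 ?_
  have h2 : 0 < 1 - |y| := by linarith
  filter_upwards [eventually_ge_atTop (⌈(2 * |v| * |y| + 2)/(1 - |y|)⌉₊)] with r hr
  have hr' : (2 * |v| * |y| + 2)/(1 - |y|) ≤ (r : ℝ) := le_trans (Nat.le_ceil _) (by exact_mod_cast hr)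
  have hr2 : 2 * |v| * |y| + 2 ≤ (r : ℝ) * (1 - |y|) := by
    rw [div_le_iff₀ h2] at hr'; linarith
  rw [term_succ]
  rw [norm_mul]
  have hb : ‖(v + r) * y / (r+1)‖ ≤ (1 + |y|)/2 := by
    rw [norm_div, norm_mul]
    have hpos : (0:ℝ) < ‖(r:ℝ)+1‖ := by
      rw [Real.norm_eq_abs, abs_of_nonneg (by positivity)]; positivity
    rw [div_le_iff₀ hpos]
    have h3 : ‖(r:ℝ)+1‖ = (r:ℝ)+1 := by
      rw [Real.norm_eq_abs, abs_of_nonneg (by positivity)]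
    rw [h3]
    have h4 : ‖v + (r:ℝ)‖ ≤ |v| + r := by
      rw [Real.norm_eq_abs]
      exact le_trans (abs_add_le _ _) (by simp)
    have h5 : ‖y‖ = |y| := rfl
    rw [h5]
    have hyn : 0 ≤ |y| := abs_nonneg y
    nlinarith [abs_nonneg v, norm_nonneg (v + (r:ℝ))]
  calc ‖term v y r‖ * ‖(v + ↑r) * y / (↑r + 1)‖
      ≤ ‖term v y r‖ * ((1 + |y|)/2) := by
        exact mul_le_mul_of_nonneg_left hb (norm_nonneg _)
    _ = (1 + |y|)/2 * ‖term v y r‖ := mul_comm _ _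


lemma abs_term_mono (w : ℝ) {z b2 : ℝ} (h : |z| ≤ b2) (s : ℕ) :
    |term w z s| ≤ |term w b2 s| := by
  unfold term
  rw [abs_div, abs_div, abs_mul, abs_mul, abs_pow, abs_pow]
  have h0 : 0 ≤ |z| := abs_nonneg z
  have h1 : |z| ^ s ≤ |b2| ^ s := by
    apply pow_le_pow_left₀ h0
    exact le_trans h (le_abs_self b2)
  gcongr

/-- derivative of the binomial series terms -/
noncomputable def gdash (v : ℝ) (r : ℕ) (z : ℝ) : ℝ :=
  (ascPochhammer ℝ r).eval v / (Nat.factorial r : ℝ) * (r * z ^ (r-1))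

lemma gdash_succ (v : ℝ) (s : ℕ) (z : ℝ) :
    gdash v (s+1) z = v * term (v+1) z s := by
  unfold gdash term
  rw [poch_succ_left, Nat.factorial_succ]
  push_cast
  have hs : ((Nat.factorial s : ℝ)) ≠ 0 := Nat.cast_ne_zero.mpr (Nat.factorial_ne_zero s)
  field_simp

lemma hasDerivAt_term (v : ℝ) (r : ℕ) (z : ℝ) :
    HasDerivAt (fun z => term v z r) (gdash v r z) z := by
  have := (hasDerivAt_pow r z).const_mul ((ascPochhammer ℝ r).eval v / (Nat.factorial r : ℝ))
  have hfun : (fun z => term v z r) = fun y => (ascPochhammer ℝ r).eval v / (Nat.factorial r : ℝ) * y ^ r := by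
    funext w; unfold term; ring
  rw [hfun]; exact this

lemma F_rec (v : ℝ) {z : ℝ} (hz : |z| < 1) :
    ∑' r, term v z r = (1 - z) * ∑' r, term (v+1) z r := by
  have S1 : HasSum (term (v+1) z) (∑' r, term (v+1) z r) := (summable_term (v+1) hz).hasSum
  have S2 : HasSum (fun r => z * term (v+1) z r) (z * ∑' r, term (v+1) z r) := S1.mul_left z
  set shift : ℕ → ℝ := fun r => match r with | 0 => 0 | (s+1) => z * term (v+1) z s with hshift
  have h0 : shift 0 = 0 := rfl
  have S2' : HasSum shift (z * ∑' r, term (v+1) z r) := by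
    have := (hasSum_nat_add_iff (f := shift) 1).mp (by exact S2)
    simpa [h0] using this
  have S3 := S1.sub S2'
  have hpt : ∀ r, term (v+1) z r - shift r = term v z r := by
    intro r
    match r with
    | 0 => simp [h0, term]
    | (s+1) =>
      show term (v+1) z (s+1) - z * term (v+1) z s = term v z (s+1)
      unfold term
      rw [poch_succ_right (v+1) s, poch_succ_left v s, Nat.factorial_succ]
      have hs : ((Nat.factorial s : ℝ)) ≠ 0 := Nat.cast_ne_zero.mpr (Nat.factorial_ne_zero s)
      push_cast
      field_simp
      ring
  rw [show (fun r => term (v+1) z r - shift r) = term v z from funext hpt] at S3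
  rw [S3.tsum_eq]
  ring

theorem hasSum_binom (v : ℝ) {y : ℝ} (hy0 : 0 ≤ y) (hy1 : y < 1) :
    HasSum (term v y) ((1 - y) ^ (-v)) := by
  set b : ℝ := (1 + y)/2 with hb
  have hb0 : 0 < b := by positivity
  have hb1 : b < 1 := by simp only [hb]; linarith
  have hyb : y < b := by simp only [hb]; linarith
  have hbabs : |b| < 1 := by rw [abs_of_pos hb0]; exact hb1
  set u : ℕ → ℝ := fun r => match r with | 0 => 0 | (s+1) => |v| * |term (v+1) b s| with hu
  have hu0 : u 0 = 0 := rfl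
  have husum : Summable u := by
    apply (summable_nat_add_iff 1).mp
    exact (by exact ((summable_term (v+1) hbabs).abs).mul_left |v| :
      Summable fun s => |v| * |term (v+1) b s|)
  have hbound : ∀ (r : ℕ) (z : ℝ), z ∈ Set.Ioo (-b) b → ‖gdash v r z‖ ≤ u r := by
    intro r z hz
    have hzb : |z| ≤ b := by
      rcases hz with ⟨h1, h2⟩; rw [abs_le]; constructor <;> linarith
    match r with
    | 0 => simp [gdash, hu0]
    | (s+1) =>
      show ‖gdash v (s+1) z‖ ≤ |v| * |term (v+1) b s|
      rw [gdash_succ, Real.norm_eq_abs, abs_mul]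
      exact mul_le_mul_of_nonneg_left (abs_term_mono (v+1) hzb s) (abs_nonneg v)
  set F : ℝ → ℝ := fun w => ∑' r, term v w r with hF'
  have hF : ∀ z ∈ Set.Ioo (-b) b,
      HasDerivAt F (∑' r, gdash v r z) z := by
    intro z hz
    exact hasDerivAt_tsum_of_isPreconnected husum isOpen_Ioo (convex_Ioo _ _).isPreconnected
      (fun r w _ => hasDerivAt_term v r w) hbound
      (⟨by linarith, hb0⟩ : (0:ℝ) ∈ Set.Ioo (-b) b)
      (summable_term v (by rw [abs_zero]; norm_num))
      hz
  have hderiv_sum : ∀ z : ℝ, |z| < 1 → ∑' r, gdash v r z = v * ∑' r, term (v+1) z r := by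
    intro z hz
    have S1 : HasSum (fun s => v * term (v+1) z s) (v * ∑' r, term (v+1) z r) :=
      ((summable_term (v+1) hz).hasSum).mul_left v
    have S1' : HasSum (fun s => gdash v (s+1) z) (v * ∑' r, term (v+1) z r) := by
      simpa [gdash_succ] using S1
    have S2 : HasSum (gdash v · z) (v * ∑' r, term (v+1) z r) := by
      have := (hasSum_nat_add_iff (f := (gdash v · z)) 1).mp S1'
      simpa [gdash] using this
    exact S2.tsum_eq
  set h : ℝ → ℝ := fun w => F w * (1 - w) ^ v with hh
  have hderiv0 : ∀ z ∈ Set.Ioo (-b) b, HasDerivAt h 0 z := by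
    intro z hz
    obtain ⟨hz1, hz2⟩ := hz
    have hzb : |z| < 1 := lt_trans (abs_lt.mpr ⟨by linarith, hz2⟩) hb1
    have h1z : 0 < 1 - z := by
      have := (abs_lt.mp hzb).2; linarith
    have d1 : HasDerivAt F (v * ∑' r, term (v+1) z r) z := by
      have := hF z ⟨hz1, hz2⟩; rwa [hderiv_sum z hzb] at this
    have d2 : HasDerivAt (fun w : ℝ => (1 - w) ^ v) (v * (1-z)^(v-1) * (-1)) z := by
      have base : HasDerivAt (fun w : ℝ => 1 - w) (-1) z := by
        have hb' := (hasDerivAt_const z (1:ℝ)).sub (hasDerivAt_id' z); rw [zero_sub] at hb'; exact hb'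
      exact (Real.hasDerivAt_rpow_const (Or.inl h1z.ne')).comp z base
    have d3 := d1.mul d2
    have hFz : F z = (1 - z) * ∑' r, term (v+1) z r := F_rec v hzb
    have hpow : (1-z)^(v-1) * (1-z) = (1-z)^v := by
      have := Real.rpow_add h1z (v-1) 1
      rw [Real.rpow_one] at this
      rw [← this]; ring_nf
    refine d3.congr_deriv (Eq.symm ?_)
    rw [hFz]
    linear_combination (v * ∑' r, term (v+1) z r) * hpow
  have key : ∀ w ∈ Set.Icc (0:ℝ) y, h w = h 0 := by
    intro w hw
    refine constant_of_has_deriv_right_zero (f := h) (a := 0) (b := y) ?_ ?_ w hw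
    · intro w' hw'
      have hmem : w' ∈ Set.Ioo (-b) b := ⟨by linarith [hw'.1], by linarith [hw'.2]⟩
      exact ((hderiv0 w' hmem).continuousAt).continuousWithinAt
    · intro w' hw'
      have hmem : w' ∈ Set.Ioo (-b) b := ⟨by linarith [hw'.1], by linarith [hw'.2.le]⟩
      exact (hderiv0 w' hmem).hasDerivWithinAt
  have hF0 : F 0 = 1 := by
    show (∑' r, term v 0 r) = 1
    rw [tsum_eq_single 0 (by
      intro r hr
      match r with
      | 0 => exact absurd rfl hr
      | (s+1) => simp [term])]
    simp [term]
  have h0 : h 0 = 1 := by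
    rw [hh]; simp [hF0]
  have hy' : h y = 1 := by
    rw [key y ⟨hy0, le_refl y⟩, h0]
  have hpos : (0:ℝ) < (1-y) ^ v := Real.rpow_pos_of_pos (by linarith) v
  have hFy : F y = (1 - y) ^ (-v) := by
    rw [Real.rpow_neg (by linarith : (0:ℝ) ≤ 1 - y)]
    rw [hh] at hy'
    field_simp at hy' ⊢
    linarith [hy']
  have := (summable_term v (by rwa [abs_of_nonneg hy0])).hasSum
  rw [show (∑' r, term v y r) = (1-y)^(-v) from hFy] at this
  exact this


lemma fact_ne (s : ℕ) : ((Nat.factorial s : ℝ)) ≠ 0 := Nat.cast_ne_zero.mpr (Nat.factorial_ne_zero s)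

lemma hasSum_binom1 (v : ℝ) {y : ℝ} (hy0 : 0 ≤ y) (hy1 : y < 1) :
    HasSum (fun r : ℕ => (r : ℝ) * term v y r) (v * y * (1 - y) ^ (-(v+1))) := by
  have h := (hasSum_binom (v+1) hy0 hy1).mul_left (v * y)
  have key : ∀ s : ℕ, v * y * term (v+1) y s = ((s+1 : ℕ) : ℝ) * term v y (s+1) := by
    intro s
    unfold term
    rw [poch_succ_left, Nat.factorial_succ]
    push_cast
    have := fact_ne s
    field_simp
    ring
  rw [show (fun s => v * y * term (v+1) y s)
      = (fun s : ℕ => ((s+1 : ℕ) : ℝ) * term v y (s+1)) from funext key] at h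
  have h2 := (hasSum_nat_add_iff (f := fun r : ℕ => (r : ℝ) * term v y r) 1).mp h
  simpa using h2

lemma hasSum_binom2 (v : ℝ) {y : ℝ} (hy0 : 0 ≤ y) (hy1 : y < 1) :
    HasSum (fun r : ℕ => (r : ℝ) * ((r : ℝ) - 1) * term v y r)
      (v * (v+1) * y^2 * (1 - y) ^ (-(v+2))) := by
  have h := (hasSum_binom (v+2) hy0 hy1).mul_left (v * (v+1) * y^2)
  have key : ∀ s : ℕ, v * (v+1) * y^2 * term (v+2) y s
      = ((s+2 : ℕ) : ℝ) * (((s+2 : ℕ) : ℝ) - 1) * term v y (s+2) := by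
    intro s
    unfold term
    rw [poch_succ_left v (s+1), poch_succ_left (v+1) s, Nat.factorial_succ, Nat.factorial_succ]
    push_cast
    have := fact_ne s
    have h2 : ((v:ℝ)+1+1) = v + 2 := by ring
    rw [h2]
    field_simp
    ring
  rw [show (fun s => v * (v+1) * y^2 * term (v+2) y s)
      = (fun s : ℕ => ((s+2 : ℕ) : ℝ) * (((s+2 : ℕ) : ℝ) - 1) * term v y (s+2)) from funext key] at h
  have h2 := (hasSum_nat_add_iff (f := fun r : ℕ => (r : ℝ) * ((r : ℝ) - 1) * term v y r) 2).mp h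
  simpa [Finset.sum_range_succ] using h2

-- Poisson-type sums
lemma hasSum_E0 : HasSum (fun j : ℕ => 1 / (Nat.factorial j : ℝ)) (Real.exp 1) := by
  have hs : Summable (fun j : ℕ => (1:ℝ)^j / (Nat.factorial j : ℝ)) :=
    Real.summable_pow_div_factorial 1
  have ht : Real.exp 1 = ∑' j : ℕ, (1:ℝ)^j / (Nat.factorial j : ℝ) := by
    rw [Real.exp_eq_exp_ℝ, NormedSpace.exp_eq_tsum_div]
  have := hs.hasSum
  rw [← ht] at this
  simpa using this

lemma hasSum_E1 : HasSum (fun j : ℕ => (j : ℝ) / (Nat.factorial j : ℝ)) (Real.exp 1) := by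
  have h := hasSum_E0
  have key : ∀ s : ℕ, 1 / (Nat.factorial s : ℝ) = ((s+1 : ℕ) : ℝ) / (Nat.factorial (s+1) : ℝ) := by
    intro s
    rw [Nat.factorial_succ]
    push_cast
    have := fact_ne s
    field_simp
  rw [show (fun j : ℕ => 1 / (Nat.factorial j : ℝ))
      = (fun s : ℕ => ((s+1 : ℕ) : ℝ) / (Nat.factorial (s+1) : ℝ)) from funext key] at h
  have h2 := (hasSum_nat_add_iff (f := fun j : ℕ => (j : ℝ) / (Nat.factorial j : ℝ)) 1).mp h
  simpa using h2

lemma hasSum_E2 : HasSum (fun j : ℕ => (j : ℝ) * ((j : ℝ) - 1) / (Nat.factorial j : ℝ))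
    (Real.exp 1) := by
  have h := hasSum_E0
  have key : ∀ s : ℕ, 1 / (Nat.factorial s : ℝ)
      = ((s+2 : ℕ) : ℝ) * (((s+2 : ℕ) : ℝ) - 1) / (Nat.factorial (s+2) : ℝ) := by
    intro s
    rw [Nat.factorial_succ, Nat.factorial_succ]
    push_cast
    have := fact_ne s
    field_simp
    ring
  rw [show (fun j : ℕ => 1 / (Nat.factorial j : ℝ))
      = (fun s : ℕ => ((s+2 : ℕ) : ℝ) * (((s+2 : ℕ) : ℝ) - 1) / (Nat.factorial (s+2) : ℝ))
      from funext key] at h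
  have h2 := (hasSum_nat_add_iff
    (f := fun j : ℕ => (j : ℝ) * ((j : ℝ) - 1) / (Nat.factorial j : ℝ)) 2).mp h
  simpa [Finset.sum_range_succ] using h2

lemma choose_factorial_real (j r : ℕ) :
    (((j+r).choose r : ℕ) : ℝ) / (Nat.factorial (j+r) : ℝ)
      = 1 / ((Nat.factorial r : ℝ) * (Nat.factorial j : ℝ)) := by
  have h : (j+r).choose r * (Nat.factorial r) * (Nat.factorial (j + r - r)) = Nat.factorial (j+r) :=
    Nat.choose_mul_factorial_mul_factorial (by omega)
  have h2 : j + r - r = j := by omega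
  rw [h2] at h
  have := fact_ne r
  have := fact_ne j
  have := fact_ne (j+r)
  field_simp
  rw [← h]
  push_cast
  ring


/-- The key Fubini-type swap for the Charlier-type double sum. -/
lemma swap_sum {v y : ℝ} (hv : 0 ≤ v) (hy0 : 0 ≤ y) (hy1 : y < 1)
    (P : ℕ → ℝ) (hP : ∀ k, 0 ≤ P k) (Q : ℕ → ℝ)
    (hQ : ∀ r, HasSum (fun j => P (j+r) / (Nat.factorial j : ℝ)) (Q r))
    (T : ℝ) (hT : HasSum (fun r => term v y r * Q r) T) :
    HasSum (fun k => (∑ r ∈ Finset.range (k+1),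
        (k.choose r : ℝ) * (ascPochhammer ℝ r).eval v * y ^ r) * P k / (Nat.factorial k : ℝ)) T := by
  set f : ℕ × ℕ → ℝ := fun p =>
    if p.1 ≤ p.2 then (p.2.choose p.1 : ℝ) * (ascPochhammer ℝ p.1).eval v * y ^ p.1
      * P p.2 / (Nat.factorial p.2 : ℝ) else 0 with hf
  have hnn : ∀ p, 0 ≤ f p := by
    intro p
    rw [hf]
    dsimp only
    split
    · have := poch_nonneg hv p.1
      have := hP p.2
      positivity
    · exact le_refl _
  -- column sums (fixed r, sum over k)
  have hcol : ∀ r, HasSum (fun k => f (r, k)) (term v y r * Q r) := by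
    intro r
    have h1 : (fun j => f (r, j + r))
        = fun j => term v y r * (P (j+r) / (Nat.factorial j : ℝ)) := by
      funext j
      rw [hf]
      dsimp only
      rw [if_pos (by omega : r ≤ j + r)]
      unfold term
      have hch := choose_factorial_real j r
      field_simp at hch ⊢
      linear_combination (Polynomial.eval v (ascPochhammer ℝ r) * y ^ r * P (j + r)) * hch
    have h2 : HasSum (fun j => f (r, j + r)) (term v y r * Q r) := by
      rw [h1]; exact (hQ r).mul_left _
    have h3 := (hasSum_nat_add_iff (f := fun k => f (r, k)) r).mp h2
    have h4 : ∑ i ∈ Finset.range r, f (r, i) = 0 := by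
      apply Finset.sum_eq_zero
      intro i hi
      rw [hf]
      dsimp only
      rw [if_neg (by simp at hi; omega)]
    rw [h4, add_zero] at h3
    exact h3
  -- summability of the double sum
  have hsum : Summable f := by
    refine (summable_prod_of_nonneg hnn).mpr ⟨fun r => (hcol r).summable, ?_⟩
    have : (fun r => ∑' k, f (r, k)) = fun r => term v y r * Q r := by
      funext r; exact (hcol r).tsum_eq
    rw [this]
    exact hT.summable
  -- total sum equals T
  have htot : ∑' p, f p = T := by
    rw [Summable.tsum_prod' hsum (fun r => (hcol r).summable)]
    calc ∑' (r) (k), f (r, k) = ∑' r, term v y r * Q r := by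
          apply tsum_congr; intro r; exact (hcol r).tsum_eq
      _ = T := hT.tsum_eq
  -- row sums (fixed k, sum over r)
  have hrow : ∀ k, HasSum (fun r => f (r, k))
      ((∑ r ∈ Finset.range (k+1), (k.choose r : ℝ) * (ascPochhammer ℝ r).eval v * y ^ r)
        * P k / (Nat.factorial k : ℝ)) := by
    intro k
    have h1 : HasSum (fun r => f (r, k)) (∑ r ∈ Finset.range (k+1), f (r, k)) := by
      apply hasSum_sum_of_ne_finset_zero
      intro r hr
      rw [hf]
      dsimp only
      rw [if_neg (by simp at hr; omega)]
    have h2 : ∑ r ∈ Finset.range (k+1), f (r, k)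
        = (∑ r ∈ Finset.range (k+1), (k.choose r : ℝ) * (ascPochhammer ℝ r).eval v * y ^ r)
          * P k / (Nat.factorial k : ℝ) := by
      rw [Finset.sum_mul, Finset.sum_div]
      apply Finset.sum_congr rfl
      intro r hr
      rw [hf]
      dsimp only
      rw [if_pos (by simp at hr; omega)]
    rw [h2] at h1
    exact h1
  -- conclude
  set g : ℕ × ℕ → ℝ := fun p => f p.swap with hg
  have hswap : Summable g := hsum.prod_symm
  have hrowsum : Summable (fun k => (∑ r ∈ Finset.range (k+1),
      (k.choose r : ℝ) * (ascPochhammer ℝ r).eval v * y ^ r) * P k / (Nat.factorial k : ℝ)) :=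
    Summable.congr (((summable_prod_of_nonneg (fun p => hnn p.swap)).mp hswap).2)
      (fun k => (hrow k).tsum_eq)
  have : ∑' k, (∑ r ∈ Finset.range (k+1),
      (k.choose r : ℝ) * (ascPochhammer ℝ r).eval v * y ^ r) * P k / (Nat.factorial k : ℝ) = T := by
    calc _ = ∑' (k) (r), g (k, r) := by
          apply tsum_congr; intro k; exact (hrow k).tsum_eq.symm
      _ = ∑' p : ℕ × ℕ, g p := by
          exact (Summable.tsum_prod' hswap (fun k => ((summable_prod_of_nonneg
            (fun p => hnn p.swap)).mp hswap).1 k)).symm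
      _ = ∑' p, f p := by
          exact ((Equiv.prodComm ℕ ℕ).tsum_eq f)
      _ = T := htot
  exact this ▸ hrowsum.hasSum


end KSq

open KSq in
/-- The operators K reproduce the square function. -/
theorem K_sq (a α β x : ℝ) (n : ℕ) (ha : 1 < a) (hn : 1 ≤ n)
    (hα : 0 ≤ α) (hαβ : α ≤ β) (hx : 0 ≤ x)
    (hrad : 0 ≤ radicand a α β x n) (hr : 0 ≤ rstar a α β x n) :
    K a α β n (fun t => t ^ 2) x = x ^ 2 := by
  have ha0 : (0:ℝ) < a := by linarith
  have ha1 : a - 1 ≠ 0 := ne_of_gt (by linarith : (0:ℝ) < a - 1)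
  have hn0 : ((n:ℝ)) ≠ 0 := by
    have : (1:ℝ) ≤ n := by exact_mod_cast hn
    linarith
  set m := rstar a α β x n with hm
  clear_value m
  set u₀ : ℝ := -(a-1) * n * m with hu₀
  clear_value u₀
  set v : ℝ := -u₀ with hvdef
  clear_value v
  have hvM' : v = (a-1) * n * m := by rw [hvdef, hu₀]; ring
  set y : ℝ := 1/a with hy
  clear_value y
  have hy0 : 0 ≤ y := by rw [hy]; positivity
  have hy1 : y < 1 := by rw [hy, div_lt_one ha0]; exact ha
  have h1y : 0 < 1 - y := by linarith
  have h1y' : (1 - y) ≠ 0 := ne_of_gt h1y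
  have hvnn : 0 ≤ v := by
    rw [hvM']
    exact mul_nonneg (mul_nonneg (by linarith) (Nat.cast_nonneg n)) hr
  set N : ℝ := (n:ℝ) + β with hNdef
  clear_value N
  have hN : 0 < N := by
    rw [hNdef]
    have : (1:ℝ) ≤ n := by exact_mod_cast hn
    linarith
  have hN0 : N ≠ 0 := ne_of_gt hN
  set e1 : ℝ := Real.exp 1 with he1
  clear_value e1
  set M : ℝ := (n:ℝ) * m with hMdef
  clear_value M
  have hvM2 : v = (a-1) * M := by rw [hvM', hMdef]; ring
  set B : ℝ := 4 + 2 * α + 1 / (a - 1) with hB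
  clear_value B
  set sR : ℝ := Real.sqrt (radicand a α β x n) with hs
  clear_value sR
  -- key algebraic identity
  have hM' : M = (-B + sR)/2 := by
    rw [hMdef, hm]
    unfold rstar
    rw [← hB, ← hs]
    field_simp
  have hs2 : sR^2 = B^2 + 4*(N^2*x^2 - 10/3 - 3*α - α^2) := by
    rw [hs, Real.sq_sqrt hrad]
    unfold radicand
    rw [← hB, ← hNdef]
  have key : M^2 + B*M = N^2*x^2 - 10/3 - 3*α - α^2 := by
    have h1 : M^2 + B*M = (sR^2 - B^2)/4 := by rw [hM']; ring
    rw [h1, hs2]; ring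
  -- the weights
  set P : ℕ → ℝ := fun k => ((k:ℝ)+α+1)^3 - ((k:ℝ)+α)^3 with hPdef
  clear_value P
  have hP : ∀ k, 0 ≤ P k := by
    intro k
    simp only [hPdef]
    nlinarith [sq_nonneg ((k:ℝ)+α), Nat.cast_nonneg (α := ℝ) k]
  set Q : ℕ → ℝ := fun r => 3 * e1 + (6*(r:ℝ)+6*α+6) * e1 + P r * e1 with hQdef
  clear_value Q
  have hQ : ∀ r, HasSum (fun j => P (j+r) / (Nat.factorial j : ℝ)) (Q r) := by
    intro r
    have h := ((hasSum_E2.mul_left 3).add (hasSum_E1.mul_left (6*(r:ℝ)+6*α+6))).add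
      (hasSum_E0.mul_left (P r))
    rw [show (fun j : ℕ => 3 * ((j:ℝ) * ((j:ℝ)-1) / (Nat.factorial j : ℝ))
          + (6*(r:ℝ)+6*α+6) * ((j:ℝ) / (Nat.factorial j : ℝ))
          + P r * (1 / (Nat.factorial j : ℝ)))
        = (fun j => P (j+r) / (Nat.factorial j : ℝ)) from funext fun j => by
          simp only [hPdef]
          have := fact_ne j
          push_cast
          field_simp
          ring] at h
    simp only [hQdef]
    rw [← he1] at h
    exact h
  -- the outer sum
  set p0 : ℝ := (1-y)^(-v) with hp0
  clear_value p0
  set p1 : ℝ := (1-y)^(-(v+1)) with hp1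
  clear_value p1
  set p2 : ℝ := (1-y)^(-(v+2)) with hp2
  clear_value p2
  set Ttot : ℝ := 3*e1 * (v*(v+1)*y^2*p2) + (6*α+12)*e1 * (v*y*p1)
    + (3*α^2+9*α+10)*e1 * p0 with hTtot
  clear_value Ttot
  have hT : HasSum (fun r => term v y r * Q r) Ttot := by
    have h := (((hasSum_binom2 v hy0 hy1).mul_left (3*e1)).add
      ((hasSum_binom1 v hy0 hy1).mul_left ((6*α+12)*e1))).add
      ((hasSum_binom v hy0 hy1).mul_left ((3*α^2+9*α+10)*e1))
    rw [show (fun r : ℕ => 3*e1 * ((r:ℝ) * ((r:ℝ)-1) * term v y r)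
          + (6*α+12)*e1 * ((r:ℝ) * term v y r)
          + (3*α^2+9*α+10)*e1 * term v y r)
        = (fun r => term v y r * Q r) from funext fun r => by
          simp only [hQdef, hPdef]
          push_cast
          ring] at h
    rw [← hp0, ← hp1, ← hp2] at h
    rw [← hTtot] at h
    exact h
  have hswap := swap_sum hvnn hy0 hy1 P hP Q hQ Ttot hT
  -- identify with charlier
  have hch : ∀ k, charlier a u₀ k
      = ∑ r ∈ Finset.range (k+1), (k.choose r : ℝ) * (ascPochhammer ℝ r).eval v * y ^ r := by
    intro k
    unfold charlier
    rw [← hvdef, ← hy]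
  -- integrals
  have hint : ∀ k : ℕ, (∫ t in (((k:ℝ) + α) / N)..(((k:ℝ) + α + 1) / N), t^2)
      = P k / N^3 / 3 := by
    intro k
    rw [integral_pow]
    simp only [hPdef]
    push_cast
    rw [div_pow, div_pow]
    ring
  -- the total sum in K
  have hKsum : HasSum (fun k => charlier a u₀ k / (Nat.factorial k : ℝ) *
      ∫ t in (((k:ℝ) + α) / N)..(((k:ℝ) + α + 1) / N), t^2) (Ttot * (1/(3*N^3))) := by
    have h := hswap.mul_right (1/(3*N^3))
    rw [show (fun k => (∑ r ∈ Finset.range (k+1),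
          (k.choose r : ℝ) * (ascPochhammer ℝ r).eval v * y ^ r) * P k / (Nat.factorial k : ℝ)
            * (1/(3*N^3)))
        = (fun k => charlier a u₀ k / (Nat.factorial k : ℝ) *
            ∫ t in (((k:ℝ) + α) / N)..(((k:ℝ) + α + 1) / N), t^2) from funext fun k => by
          rw [hint k, hch k]
          ring] at h
    exact h
  -- rewrite K
  unfold K
  rw [← hm, ← hNdef]
  rw [show -(a - 1) * (n:ℝ) * m = u₀ from hu₀.symm]
  rw [show (a - 1) * (n:ℝ) * m = v from hvM'.symm]
  rw [show (1 - 1/a : ℝ) = 1 - y from by rw [hy]]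
  have hKt : (∑' k : ℕ, charlier a u₀ k / (Nat.factorial k : ℝ) *
      ∫ t in (((k:ℝ) + α) / N)..(((k:ℝ) + α + 1) / N), (fun s => s^2) t) = Ttot * (1/(3*N^3)) := by
    exact hKsum.tsum_eq
  rw [hKt]
  -- final algebra
  have hexp : Real.exp (-1) * e1 = 1 := by
    rw [he1, ← Real.exp_add]; norm_num
  have hp1' : p1 = p0 * (1-y)⁻¹ := by
    rw [hp1, hp0, show -(v+1) = -v + (-1) from by ring, Real.rpow_add h1y, Real.rpow_neg_one]
  have hp2' : p2 = p0 * (1-y)⁻¹ * (1-y)⁻¹ := by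
    rw [hp2, hp0, show -(v+2) = -v + (-1) + (-1) from by ring, Real.rpow_add h1y,
      Real.rpow_add h1y, Real.rpow_neg_one]
  have hr0 : (1-y)^v * p0 = 1 := by
    rw [hp0, ← Real.rpow_add h1y]
    simp
  have hTv : Ttot = e1 * p0 * (3*M^2 + 3*M*B + (3*α^2+9*α+10)) := by
    rw [hTtot, hp1', hp2', hvM2, hB, hy]
    field_simp
    ring
  have hbr : 3*M^2 + 3*M*B + (3*α^2+9*α+10) = 3*N^2*x^2 := by linarith [key]
  rw [hTv, hbr]
  have hrearr : N * Real.exp (-1) * (1-y)^v * (e1 * p0 * (3*N^2*x^2) * (1/(3*N^3)))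
      = (Real.exp (-1) * e1) * ((1-y)^v * p0) * (x^2 * (3*N^3) * (1/(3*N^3))) := by
    ring
  rw [hrearr, hexp, hr0]
  field_simp
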